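/- Let c be a real n×n matrix. Then max over permutations σ of ∑_i c_{i,σ(i)} equals min over pairs of vectors (a,b) ∈ ℝ^n × ℝ^n satisfying a_i + b_j ≥ c_{ij} for all i,j, of ∑_i a_i + ∑_j b_j. -/

import Mathlib

open Finset

private lemma km_weak {n : ℕ} (c : Matrix (Fin n) (Fin n) ℝ) (σ : Equiv.Perm (Fin n))
    (a b : Fin n → ℝ) (h : ∀ i j, c i j ≤ a i + b j) :
    ∑ i, c i (σ i) ≤ (∑ i, a i) + ∑ j, b j := by
  calc ∑ i, c i (σ i) ≤ ∑ i, (a i + b (σ i)) := Finset.sum_le_sum fun i _ => h i (σ i)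
    _ = (∑ i, a i) + ∑ i, b (σ i) := Finset.sum_add_distrib
    _ = (∑ i, a i) + ∑ j, b j := by rw [Equiv.sum_comp σ b]

private lemma km_main {n : ℕ} (hn : 0 < n) (c : Matrix (Fin n) (Fin n) ℝ) :
    ∃ a b : Fin n → ℝ, (∀ i j, c i j ≤ a i + b j) ∧
      IsLeast {s : ℝ | ∃ a b : Fin n → ℝ, (∀ i j, c i j ≤ a i + b j) ∧
        s = (∑ i, a i) + ∑ j, b j} ((∑ i, a i) + ∑ j, b j) ∧
      ∃ σ : Equiv.Perm (Fin n), ∑ i, c i (σ i) = (∑ i, a i) + ∑ j, b j := by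
  classical
  have hne : (univ : Finset (Fin n)).Nonempty := univ_nonempty_iff.mpr ⟨⟨0, hn⟩⟩
  set L : Fin n → ℝ := fun i => univ.inf' hne (c i) with hLdef
  set K : ℝ := ∑ i, univ.sup' hne (c i) with hKdef
  set S : Set ((Fin n → ℝ) × (Fin n → ℝ)) :=
    {p | (∀ i j, c i j ≤ p.1 i + p.2 j) ∧ (∀ i, L i ≤ p.1 i) ∧ (∀ j, 0 ≤ p.2 j) ∧
      (∑ i, p.1 i) + ∑ j, p.2 j ≤ K} with hSdef
  have hp0 : ((fun i => univ.sup' hne (c i), fun _ => 0) : (Fin n → ℝ) × (Fin n → ℝ)) ∈ S := by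
    refine ⟨fun i j => ?_, fun i => ?_, fun j => le_refl _, ?_⟩
    · show c i j ≤ univ.sup' hne (c i) + 0
      rw [add_zero]; exact Finset.le_sup' (c i) (mem_univ j)
    · exact le_trans (Finset.inf'_le (c i) (mem_univ ⟨0, hn⟩))
        (Finset.le_sup' (c i) (mem_univ ⟨0, hn⟩))
    · simp [hKdef]
  -- S is closed
  have hSclosed : IsClosed S := by
    have h1 : IsClosed {p : (Fin n → ℝ) × (Fin n → ℝ) | ∀ i j, c i j ≤ p.1 i + p.2 j} := by
      have he : {p : (Fin n → ℝ) × (Fin n → ℝ) | ∀ i j, c i j ≤ p.1 i + p.2 j}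
          = ⋂ i, ⋂ j, {p : (Fin n → ℝ) × (Fin n → ℝ) | c i j ≤ p.1 i + p.2 j} := by
        ext p; simp
      rw [he]
      exact isClosed_iInter fun i => isClosed_iInter fun j =>
        isClosed_le continuous_const (by fun_prop)
    have h2 : IsClosed {p : (Fin n → ℝ) × (Fin n → ℝ) | ∀ i, L i ≤ p.1 i} := by
      have he : {p : (Fin n → ℝ) × (Fin n → ℝ) | ∀ i, L i ≤ p.1 i}
          = ⋂ i, {p : (Fin n → ℝ) × (Fin n → ℝ) | L i ≤ p.1 i} := by ext p; simp
      rw [he]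
      exact isClosed_iInter fun i => isClosed_le continuous_const (by fun_prop)
    have h3 : IsClosed {p : (Fin n → ℝ) × (Fin n → ℝ) | ∀ j, (0:ℝ) ≤ p.2 j} := by
      have he : {p : (Fin n → ℝ) × (Fin n → ℝ) | ∀ j, (0:ℝ) ≤ p.2 j}
          = ⋂ j, {p : (Fin n → ℝ) × (Fin n → ℝ) | (0:ℝ) ≤ p.2 j} := by ext p; simp
      rw [he]
      exact isClosed_iInter fun j => isClosed_le continuous_const (by fun_prop)
    have h4 : IsClosed {p : (Fin n → ℝ) × (Fin n → ℝ) | (∑ i, p.1 i) + ∑ j, p.2 j ≤ K} :=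
      isClosed_le (by fun_prop) continuous_const
    have he : S = ({p : (Fin n → ℝ) × (Fin n → ℝ) | ∀ i j, c i j ≤ p.1 i + p.2 j}
        ∩ {p | ∀ i, L i ≤ p.1 i} ∩ {p | ∀ j, (0:ℝ) ≤ p.2 j}
        ∩ {p | (∑ i, p.1 i) + ∑ j, p.2 j ≤ K}) := by
      ext p; simp only [hSdef, Set.mem_setOf_eq, Set.mem_inter_iff]; tauto
    rw [he]
    exact ((h1.inter h2).inter h3).inter h4
  -- S is contained in a compact box
  have hSsub : S ⊆ (Set.Icc L fun i => K - ∑ x ∈ univ.erase i, L x) ×ˢ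
      (Set.Icc 0 fun _ => K - ∑ i, L i) := by
    rintro p ⟨hfeas, hLa, hb, hsum⟩
    have hb0 : 0 ≤ ∑ j, p.2 j := Finset.sum_nonneg fun j _ => hb j
    have ha1 : ∑ i, p.1 i ≤ K := by linarith
    have hLsum : ∑ i, L i ≤ ∑ i, p.1 i := Finset.sum_le_sum fun i _ => hLa i
    refine ⟨⟨fun i => hLa i, fun i => ?_⟩, ⟨fun j => hb j, fun j => ?_⟩⟩
    · have h1 : ∑ x ∈ univ.erase i, L x ≤ ∑ x ∈ univ.erase i, p.1 x :=
        Finset.sum_le_sum fun x _ => hLa x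
      have h2 : p.1 i + ∑ x ∈ univ.erase i, p.1 x = ∑ x, p.1 x :=
        Finset.add_sum_erase univ p.1 (mem_univ i)
      simp only []
      linarith
    · have h1 : p.2 j ≤ ∑ j', p.2 j' :=
        Finset.single_le_sum (fun j' _ => hb j') (mem_univ j)
      simp only []
      linarith
  have hScompact : IsCompact S :=
    (isCompact_Icc.prod isCompact_Icc).of_isClosed_subset hSclosed hSsub
  -- obtain a minimizer
  obtain ⟨p, hpS, hpmin⟩ := hScompact.exists_isMinOn ⟨_, hp0⟩
    (Continuous.continuousOn (f := fun p : (Fin n → ℝ) × (Fin n → ℝ) =>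
      (∑ i, p.1 i) + ∑ j, p.2 j) (by fun_prop))
  have hpmin' : ∀ q ∈ S, (∑ i, p.1 i) + ∑ j, p.2 j ≤ (∑ i, q.1 i) + ∑ j, q.2 j :=
    fun q hq => hpmin hq
  obtain ⟨hfeas, hLa, hbnn, hsumK⟩ := hpS
  set a : Fin n → ℝ := p.1
  set b : Fin n → ℝ := p.2
  set m : ℝ := (∑ i, a i) + ∑ j, b j with hmdef
  -- m is the least dual value
  have hleast : IsLeast {s : ℝ | ∃ a b : Fin n → ℝ, (∀ i j, c i j ≤ a i + b j) ∧
      s = (∑ i, a i) + ∑ j, b j} m := by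
    constructor
    · exact ⟨a, b, hfeas, rfl⟩
    · rintro s ⟨a', b', hfeas', rfl⟩
      set t : ℝ := univ.inf' hne b' with htdef
      obtain ⟨j0, -, hj0⟩ := Finset.exists_mem_eq_inf' hne b'
      set a'' : Fin n → ℝ := fun i => a' i + t with ha''
      set b'' : Fin n → ℝ := fun j => b' j - t with hb''
      have hfeas'' : ∀ i j, c i j ≤ a'' i + b'' j := by
        intro i j; have := hfeas' i j; simp only [ha'', hb'']; linarith
      have hbnn'' : ∀ j, 0 ≤ b'' j := by
        intro j; have := Finset.inf'_le b' (mem_univ j); simp only [hb'']; linarith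
      have hL'' : ∀ i, L i ≤ a'' i := by
        intro i
        have h1 : c i j0 ≤ a'' i + b'' j0 := hfeas'' i j0
        have h2 : b'' j0 = 0 := by simp only [hb'']; rw [← hj0]; ring
        have h3 : L i ≤ c i j0 := Finset.inf'_le (c i) (mem_univ j0)
        linarith
      have hsum'' : (∑ i, a'' i) + ∑ j, b'' j = (∑ i, a' i) + ∑ j, b' j := by
        simp only [ha'', hb'', Finset.sum_add_distrib, Finset.sum_sub_distrib,
          Finset.sum_const, card_univ, Fintype.card_fin, nsmul_eq_mul]
        ring
      by_cases hd : (∑ i, a' i) + ∑ j, b' j ≤ K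
      · have hmem : ((a'', b'') : (Fin n → ℝ) × (Fin n → ℝ)) ∈ S :=
          ⟨hfeas'', hL'', hbnn'', by rw [hsum'']; exact hd⟩
        have := hpmin' _ hmem
        simp only [hmdef] at *
        linarith
      · have hmK : m ≤ K := by
          have := hpmin' _ hp0
          simp only [hmdef] at *
          simpa [hKdef] using this
        linarith
  refine ⟨a, b, hfeas, hleast, ?_⟩
  -- Hall's condition for the equality graph
  set T : Fin n → Finset (Fin n) := fun i => univ.filter fun j => a i + b j ≤ c i j with hTdef
  have hall : ∀ s : Finset (Fin n), s.card ≤ (s.biUnion T).card := by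
    by_contra hcon
    push_neg at hcon
    obtain ⟨s, hs⟩ := hcon
    set N : Finset (Fin n) := s.biUnion T with hNdef
    have hsne : s.Nonempty := card_pos.mp (lt_of_le_of_lt (Nat.zero_le _) hs)
    have hNc : (Nᶜ : Finset (Fin n)).Nonempty := by
      rw [← card_pos, card_compl]
      have h1 : s.card ≤ Fintype.card (Fin n) := card_le_univ s
      omega
    have hP : (s ×ˢ (Nᶜ : Finset (Fin n))).Nonempty := hsne.product hNc
    set ε : ℝ := (s ×ˢ (Nᶜ : Finset (Fin n))).inf' hP
      (fun q => a q.1 + b q.2 - c q.1 q.2) with hεdef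
    have hε : 0 < ε := by
      rw [hεdef, Finset.lt_inf'_iff]
      rintro ⟨i, j⟩ hij
      rw [Finset.mem_product] at hij
      obtain ⟨hi, hj⟩ := hij
      rw [Finset.mem_compl] at hj
      have hjT : j ∉ T i := fun hmem => hj (Finset.mem_biUnion.mpr ⟨i, hi, hmem⟩)
      simp only [hTdef, mem_filter, mem_univ, true_and, not_le] at hjT
      simp only []
      linarith
    set a' : Fin n → ℝ := fun i => a i - (if i ∈ s then ε else 0) with ha'
    set b' : Fin n → ℝ := fun j => b j + (if j ∈ N then ε else 0) with hb'
    have hfeas' : ∀ i j, c i j ≤ a' i + b' j := by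
      intro i j
      simp only [ha', hb']
      by_cases hi : i ∈ s
      · by_cases hj : j ∈ N
        · simp only [hi, hj, if_pos]; have := hfeas i j; linarith
        · have hmem : (i, j) ∈ s ×ˢ (Nᶜ : Finset (Fin n)) :=
            Finset.mem_product.mpr ⟨hi, Finset.mem_compl.mpr hj⟩
          have h1 : ε ≤ a i + b j - c i j := Finset.inf'_le _ hmem
          simp only [hi, hj, if_pos, if_neg, if_false]
          linarith
      · have := hfeas i j
        simp only [hi, if_neg, if_false]
        split_ifs <;> linarith
    have hsa : ∑ i, a' i = (∑ i, a i) - s.card * ε := by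
      simp only [ha', Finset.sum_sub_distrib]
      congr 1
      rw [Finset.sum_ite_mem, univ_inter, Finset.sum_const, nsmul_eq_mul]
    have hsb : ∑ j, b' j = (∑ j, b j) + N.card * ε := by
      simp only [hb', Finset.sum_add_distrib]
      congr 1
      rw [Finset.sum_ite_mem, univ_inter, Finset.sum_const, nsmul_eq_mul]
    have hlt : (N.card : ℝ) * ε < s.card * ε :=
      mul_lt_mul_of_pos_right (by exact_mod_cast hs) hε
    have hmem : ((∑ i, a' i) + ∑ j, b' j) ∈ {s : ℝ | ∃ a b : Fin n → ℝ,
        (∀ i j, c i j ≤ a i + b j) ∧ s = (∑ i, a i) + ∑ j, b j} := ⟨a', b', hfeas', rfl⟩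
    have := hleast.2 hmem
    rw [hsa, hsb] at this
    simp only [hmdef] at this
    linarith
  obtain ⟨f, hfinj, hf⟩ := (Finset.all_card_le_biUnion_card_iff_exists_injective T).mp hall
  have hbij : Function.Bijective f := Finite.injective_iff_bijective.mp hfinj
  refine ⟨Equiv.ofBijective f hbij, ?_⟩
  have heq : ∀ i, c i (f i) = a i + b (f i) := by
    intro i
    have h1 := hf i
    simp only [hTdef, mem_filter, mem_univ, true_and] at h1
    exact le_antisymm (hfeas i (f i)) h1
  calc ∑ i, c i ((Equiv.ofBijective f hbij) i) = ∑ i, (a i + b (f i)) := by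
        apply Finset.sum_congr rfl; intro i _; exact heq i
    _ = (∑ i, a i) + ∑ i, b ((Equiv.ofBijective f hbij) i) := Finset.sum_add_distrib
    _ = (∑ i, a i) + ∑ j, b j := by rw [Equiv.sum_comp (Equiv.ofBijective f hbij) b]

/-- **Kuhn–Munkres duality.** For a real `n × n` matrix `c`, the maximal sum of a
transversal equals the minimal sum `∑ a i + ∑ b j` of a potential, i.e. of vectors
`a, b` with `a i + b j ≥ c i j` for all `i, j`. -/
theorem kuhn_munkres {n : ℕ} (c : Matrix (Fin n) (Fin n) ℝ) :
    ∃ m : ℝ,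
      IsGreatest {s : ℝ | ∃ σ : Equiv.Perm (Fin n), s = ∑ i, c i (σ i)} m ∧
      IsLeast {s : ℝ | ∃ a b : Fin n → ℝ, (∀ i j, c i j ≤ a i + b j) ∧
        s = (∑ i, a i) + ∑ j, b j} m := by
  rcases Nat.eq_zero_or_pos n with h0 | hn
  · subst h0
    refine ⟨0, ⟨⟨Equiv.refl _, by simp⟩, ?_⟩, ⟨fun _ => 0, fun _ => 0, fun i => i.elim0, by simp⟩,
      ?_⟩
    · rintro s ⟨σ, rfl⟩; simp
    · rintro s ⟨a, b, h, rfl⟩; simp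
  · obtain ⟨a, b, hfeas, hleast, σ, hσ⟩ := km_main hn c
    exact ⟨(∑ i, a i) + ∑ j, b j, ⟨⟨σ, hσ.symm⟩,
      fun s ⟨τ, hτ⟩ => hτ ▸ km_weak c τ a b hfeas⟩, hleast⟩
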